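/- Let q ∈ (1/2,1), λ ∈ (0,1), K ≥ 1, 1 ≤ C ≤ K/2, and let φ denote the majority-rule inflow accuracy function. Suppose x* ∈ (1/2, 1) is a fixed point of φ at virality weight λ with x* > q, and let λ' ∈ (λ, 1]. Then φ evaluated at x* with virality weight λ' satisfies φ^{λ'}(x*) > x*, and since φ^{λ'}(1) < 1, there exists a fixed point x** ∈ (x*, 1) of φ^{λ'}. (Monotonicity of informative steady states in the virality weight.) -/

import Mathlib

open Finset

noncomputable def binPMF (J k : ℕ) (p : ℝ) : ℝ :=
  (J.choose k : ℝ) * p ^ k * (1 - p) ^ (J - k)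

/-- Majority-rule inflow accuracy with virality weight `l`, for general parity of `K`. -/
noncomputable def inflowMaj (q : ℝ) (K C : ℕ) (l x : ℝ) : ℝ :=
  (q + (C : ℝ) * ((∑ k ∈ Finset.Icc (K/2 + 1) K, binPMF K k (l * x + (1 - l) * q)) +
    (if Even K then q * binPMF K (K/2) (l * x + (1 - l) * q) else 0))) / (1 + (C : ℝ))

/-! ### Auxiliary lemmas -/

lemma nat_id1 (K k : ℕ) (hk : 1 ≤ k) : K * ((K-1).choose (k-1)) = K.choose k * k := by
  rcases Nat.eq_zero_or_pos K with h | h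
  · subst h; simp [Nat.choose_eq_zero_of_lt hk]
  · have := Nat.add_one_mul_choose_eq (K-1) (k-1)
    simpa [Nat.succ_eq_add_one, Nat.sub_add_cancel h, Nat.sub_add_cancel hk] using this

lemma nat_id2 (K k : ℕ) : K.choose k * (K - k) = K * ((K-1).choose k) := by
  rcases Nat.eq_zero_or_pos K with h | h
  · subst h; simp
  · have := Nat.choose_mul_succ_eq (K-1) k
    rw [Nat.sub_add_cancel h] at this
    rw [← this, Nat.mul_comm]

/-- Telescoping term for the derivative of the binomial tail. -/
noncomputable def Aterm (K : ℕ) (p : ℝ) (k : ℕ) : ℝ :=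
  (K : ℝ) * ((K-1).choose (k-1) : ℝ) * p ^ (k-1) * (1-p) ^ (K-k)

lemma hasDerivAt_binPMF (K k : ℕ) (hk : 1 ≤ k) (p : ℝ) :
    HasDerivAt (fun p => binPMF K k p) (Aterm K p k - Aterm K p (k+1)) p := by
  have h1 : HasDerivAt (fun p : ℝ => p ^ k) ((k : ℝ) * p ^ (k-1)) p := by
    simpa using hasDerivAt_pow k p
  have h2 : HasDerivAt (fun p : ℝ => (1 - p) ^ (K - k))
      (-(((K - k : ℕ) : ℝ) * (1-p) ^ (K - k - 1))) p := by
    have hin : HasDerivAt (fun p : ℝ => 1 - p) (-1) p := (hasDerivAt_id p).const_sub 1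
    simpa [Function.comp_def, mul_comm, mul_assoc] using (hasDerivAt_pow (K - k) (1 - p)).comp p hin
  have h3 := ((h1.mul h2).const_mul ((K.choose k : ℝ)))
  have key : (K.choose k : ℝ) * ((k : ℝ) * p ^ (k-1) * (1-p)^(K-k)
      + p ^ k * -(((K - k : ℕ) : ℝ) * (1-p) ^ (K - k - 1)))
      = Aterm K p k - Aterm K p (k+1) := by
    have e1 : (K : ℝ) * ((K-1).choose (k-1) : ℝ) = (K.choose k : ℝ) * (k : ℝ) := by
      exact_mod_cast congrArg (Nat.cast : ℕ → ℝ) (nat_id1 K k hk)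
    have e2 : (K.choose k : ℝ) * ((K - k : ℕ) : ℝ) = (K : ℝ) * ((K-1).choose k : ℝ) := by
      exact_mod_cast congrArg (Nat.cast : ℕ → ℝ) (nat_id2 K k)
    unfold Aterm
    have hsub : K - (k+1) = K - k - 1 := by omega
    have hsub2 : (k + 1) - 1 = k := by omega
    rw [hsub, hsub2, e1, ← e2]
    ring
  rw [← key]
  simpa [binPMF, mul_assoc] using h3

/-- The tail sum appearing in `inflowMaj`, as a function of the sampling accuracy. -/
noncomputable def tailFun (q : ℝ) (K : ℕ) (p : ℝ) : ℝ :=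
  (∑ k ∈ Finset.Icc (K/2 + 1) K, binPMF K k p) +
    (if Even K then q * binPMF K (K/2) p else 0)

noncomputable def Dval (q : ℝ) (K : ℕ) (p : ℝ) : ℝ :=
  Aterm K p (K/2+1) + (if Even K then q * (Aterm K p (K/2) - Aterm K p (K/2+1)) else 0)

lemma Aterm_top (K : ℕ) (hK : 1 ≤ K) (p : ℝ) : Aterm K p (K+1) = 0 := by
  unfold Aterm
  rw [Nat.choose_eq_zero_of_lt (by omega : K - 1 < K + 1 - 1)]
  simp

lemma hasDerivAt_tailFun (q : ℝ) (K : ℕ) (hK : 1 ≤ K) (p : ℝ) :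
    HasDerivAt (fun p => tailFun q K p) (Dval q K p) p := by
  have hsum : HasDerivAt (fun p => ∑ k ∈ Finset.Icc (K/2 + 1) K, binPMF K k p)
      (∑ k ∈ Finset.Icc (K/2 + 1) K, (Aterm K p k - Aterm K p (k+1))) p := by
    apply HasDerivAt.fun_sum
    intro k hk
    refine hasDerivAt_binPMF K k ?_ p
    simp only [Finset.mem_Icc] at hk; omega
  have htel : (∑ k ∈ Finset.Icc (K/2 + 1) K, (Aterm K p k - Aterm K p (k+1)))
      = Aterm K p (K/2+1) := by
    rw [← Finset.Ico_add_one_right_eq_Icc, Finset.sum_Ico_eq_sum_range]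
    simp only [show ∀ k:ℕ, K/2+1+k+1 = K/2+1+(k+1) from fun k => rfl]
    rw [Finset.sum_range_sub' (fun i => Aterm K p (K/2+1+i))]
    have h0 : K/2 + 1 + (K + 1 - (K/2 + 1)) = K + 1 := by omega
    rw [h0, Aterm_top K hK]
    simp
  rw [htel] at hsum
  unfold tailFun Dval
  by_cases hE : Even K
  · simp only [hE, if_true]
    have h2 : 1 ≤ K/2 := by rcases hE with ⟨m, hm⟩; omega
    have hb := (hasDerivAt_binPMF K (K/2) h2 p).const_mul q
    exact hsum.add hb
  · simp only [hE, if_false]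
    simpa using hsum.add_const 0

lemma Aterm_pos (K : ℕ) (hK : 1 ≤ K) {p : ℝ} (hp0 : 0 < p) (hp1 : p < 1)
    {k : ℕ} (h1 : 1 ≤ k) (h2 : k ≤ K) : 0 < Aterm K p k := by
  unfold Aterm
  have hK0 : (0:ℝ) < (K : ℝ) := by exact_mod_cast hK
  have hc : (0:ℝ) < ((K-1).choose (k-1) : ℝ) := by
    exact_mod_cast Nat.choose_pos (by omega : k - 1 ≤ K - 1)
  have h1p : (0:ℝ) < 1 - p := by linarith
  positivity

lemma Dval_pos (q : ℝ) (K : ℕ) (hK : 1 ≤ K) (hq0 : 0 < q) (hq1 : q < 1)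
    {p : ℝ} (hp : p ∈ Set.Ioo (0:ℝ) 1) : 0 < Dval q K p := by
  have hA1 : 0 < Aterm K p (K/2+1) :=
    Aterm_pos K hK hp.1 hp.2 (by omega) (by omega)
  unfold Dval
  by_cases hE : Even K
  · have h2 : 1 ≤ K/2 := by rcases hE with ⟨m, hm⟩; omega
    have hA2 : 0 < Aterm K p (K/2) :=
      Aterm_pos K hK hp.1 hp.2 h2 (by omega)
    simp only [hE, if_true]
    nlinarith
  · simp only [hE, if_false]
    linarith

lemma continuous_tailFun (q : ℝ) (K : ℕ) : Continuous (tailFun q K) := by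
  unfold tailFun binPMF
  by_cases hE : Even K <;> simp only [hE, if_true, if_false] <;> fun_prop

lemma tailFun_strictMonoOn (q : ℝ) (K : ℕ) (hK : 1 ≤ K) (hq0 : 0 < q) (hq1 : q < 1) :
    StrictMonoOn (tailFun q K) (Set.Icc 0 1) := by
  apply strictMonoOn_of_deriv_pos (convex_Icc 0 1) (continuous_tailFun q K).continuousOn
  intro p hp
  rw [interior_Icc] at hp
  rw [(hasDerivAt_tailFun q K hK p).deriv]
  exact Dval_pos q K hK hq0 hq1 hp

lemma binPMF_nonneg (K k : ℕ) {p : ℝ} (hp0 : 0 ≤ p) (hp1 : p ≤ 1) : 0 ≤ binPMF K k p := by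
  unfold binPMF
  have : (0:ℝ) ≤ 1 - p := by linarith
  positivity

lemma sum_binPMF (K : ℕ) (p : ℝ) : ∑ k ∈ Finset.range (K+1), binPMF K k p = 1 := by
  calc ∑ k ∈ Finset.range (K+1), binPMF K k p
      = ∑ k ∈ Finset.range (K+1), p^k * (1-p)^(K-k) * (K.choose k : ℝ) := by
        refine Finset.sum_congr rfl fun k _ => ?_
        unfold binPMF; ring
    _ = (p + (1-p))^K := (add_pow p (1-p) K).symm
    _ = 1 := by norm_num

lemma tailFun_le_one (q : ℝ) (K : ℕ) (hq0 : 0 ≤ q) (hq1 : q ≤ 1) {p : ℝ}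
    (hp0 : 0 ≤ p) (hp1 : p ≤ 1) : tailFun q K p ≤ 1 := by
  have hnn : ∀ k, 0 ≤ binPMF K k p := fun k => binPMF_nonneg K k hp0 hp1
  have hstep : tailFun q K p ≤ ∑ k ∈ insert (K/2) (Finset.Icc (K/2+1) K), binPMF K k p := by
    rw [Finset.sum_insert (by simp)]
    unfold tailFun
    have : (if Even K then q * binPMF K (K/2) p else 0) ≤ binPMF K (K/2) p := by
      by_cases hE : Even K
      · simp only [hE, if_true]
        nlinarith [hnn (K/2)]
      · simp only [hE, if_false]; exact hnn _
    linarith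
  refine hstep.trans ?_
  rw [← sum_binPMF K p]
  apply Finset.sum_le_sum_of_subset_of_nonneg
  · intro k hk
    simp only [Finset.mem_insert, Finset.mem_Icc] at hk
    simp only [Finset.mem_range]
    omega
  · intro k _ _; exact hnn k

lemma inflowMaj_eq (q : ℝ) (K C : ℕ) (l x : ℝ) :
    inflowMaj q K C l x = (q + (C:ℝ) * tailFun q K (l * x + (1 - l) * q)) / (1 + (C:ℝ)) := rfl

lemma continuous_inflowMaj (q : ℝ) (K C : ℕ) (l : ℝ) :
    Continuous (fun x => inflowMaj q K C l x) := by
  have : (fun x => inflowMaj q K C l x)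
      = fun x => (q + (C:ℝ) * tailFun q K (l * x + (1 - l) * q)) / (1 + (C:ℝ)) := rfl
  rw [this]
  have := continuous_tailFun q K
  fun_prop

theorem stmt16 (q lam lam' xstar : ℝ) (K C : ℕ)
    (hq : q ∈ Set.Ioo (1/2 : ℝ) 1) (hlam : lam ∈ Set.Ioo (0:ℝ) 1)
    (hK : 1 ≤ K) (hC : 1 ≤ C) (hCK : 2 * C ≤ K)
    (hxstar : xstar ∈ Set.Ioo (1/2 : ℝ) 1) (hxq : q < xstar)
    (hfix : inflowMaj q K C lam xstar = xstar)
    (hlam' : lam' ∈ Set.Ioc lam 1) :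
    xstar < inflowMaj q K C lam' xstar ∧
    inflowMaj q K C lam' 1 < 1 ∧
    ∃ x ∈ Set.Ioo xstar 1, inflowMaj q K C lam' x = x := by
  obtain ⟨hq0, hq1⟩ := hq
  obtain ⟨hl0, hl1⟩ := hlam
  obtain ⟨hx0, hx1⟩ := hxstar
  obtain ⟨hll', hl'1⟩ := hlam'
  have hq0' : (0:ℝ) < q := by linarith
  have hl'0 : (0:ℝ) < lam' := by linarith
  have hC0 : (0:ℝ) < (C:ℝ) := by exact_mod_cast hC
  -- the two sampling accuracies at xstar
  set p1 := lam * xstar + (1 - lam) * q with hp1def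
  set p2 := lam' * xstar + (1 - lam') * q with hp2def
  have hp1mem : p1 ∈ Set.Icc (0:ℝ) 1 := by
    constructor
    · nlinarith
    · nlinarith
  have hp2mem : p2 ∈ Set.Icc (0:ℝ) 1 := by
    constructor
    · nlinarith
    · nlinarith
  have hp12 : p1 < p2 := by nlinarith
  have hmono := tailFun_strictMonoOn q K hK hq0' hq1 hp1mem hp2mem hp12
  -- part 1
  have part1 : xstar < inflowMaj q K C lam' xstar := by
    have h : inflowMaj q K C lam xstar < inflowMaj q K C lam' xstar := by
      rw [inflowMaj_eq, inflowMaj_eq, div_lt_div_iff_of_pos_right (by positivity)]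
      nlinarith
    rwa [hfix] at h
  -- part 2
  have hp3mem : (lam' * 1 + (1 - lam') * q) ∈ Set.Icc (0:ℝ) 1 := by
    constructor
    · nlinarith
    · nlinarith
  have part2 : inflowMaj q K C lam' 1 < 1 := by
    rw [inflowMaj_eq]
    rw [div_lt_one (by positivity)]
    have := tailFun_le_one q K (le_of_lt hq0') (le_of_lt hq1) hp3mem.1 hp3mem.2
    nlinarith
  refine ⟨part1, part2, ?_⟩
  -- part 3 : IVT
  set f : ℝ → ℝ := fun x => inflowMaj q K C lam' x - x with hfdef
  have hcf : ContinuousOn f (Set.Icc xstar 1) :=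
    ((continuous_inflowMaj q K C lam').sub continuous_id).continuousOn
  have h0mem : (0:ℝ) ∈ Set.Ioo (f 1) (f xstar) := by
    constructor
    · simp only [hfdef]; linarith
    · simp only [hfdef]; linarith
  obtain ⟨x, hx, hfx⟩ := intermediate_value_Ioo' (le_of_lt hx1) hcf h0mem
  exact ⟨x, hx, by simp only [hfdef] at hfx; linarith⟩
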